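/- For the Kagome lattice Hamiltonian, det(H_0(x) − λ) = −(λ − 1/2)(λ² + λ/2 − β(x)/8), where β(x) = 1 + cos x_1 + cos x_2 + cos(x_1 − x_2) and H_0(x) is the given 3×3 matrix. In particular, 1/2 is an eigenvalue of H_0(x) for every x. -/

import Mathlib

set_option maxHeartbeats 1000000

theorem statement8 (x₁ x₂ : ℝ) (lam : ℂ)
    (H₀ : Matrix (Fin 3) (Fin 3) ℂ)
    (hH₀ : H₀ = (-(1 / 4) : ℂ) •
      !![0, 1 + Complex.exp (Complex.I * ((x₁ : ℂ) - (x₂ : ℂ))),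
            1 + Complex.exp (Complex.I * (x₁ : ℂ));
         1 + Complex.exp (-Complex.I * ((x₁ : ℂ) - (x₂ : ℂ))), 0,
            1 + Complex.exp (Complex.I * (x₂ : ℂ));
         1 + Complex.exp (-Complex.I * (x₁ : ℂ)),
            1 + Complex.exp (-Complex.I * (x₂ : ℂ)), 0]) :
    (H₀ - lam • (1 : Matrix (Fin 3) (Fin 3) ℂ)).det
      = -(lam - 1 / 2) * (lam ^ 2 + lam / 2
          - ((1 : ℂ) + (Real.cos x₁ : ℂ) + (Real.cos x₂ : ℂ) + (Real.cos (x₁ - x₂) : ℂ)) / 8)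
    ∧ (H₀ - (1 / 2 : ℂ) • (1 : Matrix (Fin 3) (Fin 3) ℂ)).det = 0 := by
  have key : ∀ μ : ℂ, (H₀ - μ • (1 : Matrix (Fin 3) (Fin 3) ℂ)).det
      = -(μ - 1 / 2) * (μ ^ 2 + μ / 2
          - ((1 : ℂ) + (Real.cos x₁ : ℂ) + (Real.cos x₂ : ℂ) + (Real.cos (x₁ - x₂) : ℂ)) / 8) := by
    intro μ
    have hM : H₀ - μ • (1 : Matrix (Fin 3) (Fin 3) ℂ) =
        !![-μ, -(1 + Complex.exp (Complex.I * ((x₁ : ℂ) - (x₂ : ℂ)))) / 4,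
              -(1 + Complex.exp (Complex.I * (x₁ : ℂ))) / 4;
           -(1 + Complex.exp (-Complex.I * ((x₁ : ℂ) - (x₂ : ℂ)))) / 4, -μ,
              -(1 + Complex.exp (Complex.I * (x₂ : ℂ))) / 4;
           -(1 + Complex.exp (-Complex.I * (x₁ : ℂ))) / 4,
              -(1 + Complex.exp (-Complex.I * (x₂ : ℂ))) / 4, -μ] := by
      subst hH₀
      ext i j
      fin_cases i <;> fin_cases j <;>
        first
          | (simp [Matrix.one_apply, Fin.ext_iff]; try ring)
          | ring
          | rfl
    rw [hM]
    rw [show (!![-μ, -(1 + Complex.exp (Complex.I * ((x₁ : ℂ) - (x₂ : ℂ)))) / 4,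
              -(1 + Complex.exp (Complex.I * (x₁ : ℂ))) / 4;
           -(1 + Complex.exp (-Complex.I * ((x₁ : ℂ) - (x₂ : ℂ)))) / 4, -μ,
              -(1 + Complex.exp (Complex.I * (x₂ : ℂ))) / 4;
           -(1 + Complex.exp (-Complex.I * (x₁ : ℂ))) / 4,
              -(1 + Complex.exp (-Complex.I * (x₂ : ℂ))) / 4, -μ] :
          Matrix (Fin 3) (Fin 3) ℂ).det =
        (-μ) * ((-μ) * (-μ) - (-(1 + Complex.exp (Complex.I * (x₂ : ℂ))) / 4) *
            (-(1 + Complex.exp (-Complex.I * (x₂ : ℂ))) / 4))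
        - (-(1 + Complex.exp (Complex.I * ((x₁ : ℂ) - (x₂ : ℂ)))) / 4) *
            ((-(1 + Complex.exp (-Complex.I * ((x₁ : ℂ) - (x₂ : ℂ)))) / 4) * (-μ)
              - (-(1 + Complex.exp (Complex.I * (x₂ : ℂ))) / 4) *
                (-(1 + Complex.exp (-Complex.I * (x₁ : ℂ))) / 4))
        + (-(1 + Complex.exp (Complex.I * (x₁ : ℂ))) / 4) *
            ((-(1 + Complex.exp (-Complex.I * ((x₁ : ℂ) - (x₂ : ℂ)))) / 4) *
                (-(1 + Complex.exp (-Complex.I * (x₂ : ℂ))) / 4)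
              - (-μ) * (-(1 + Complex.exp (-Complex.I * (x₁ : ℂ))) / 4))
        from by rw [Matrix.det_fin_three]; simp [Matrix.vecHead, Matrix.vecTail]; ring]
    have hc : ∀ y : ℝ, ((Real.cos y : ℂ)) =
        (Complex.exp (Complex.I * (y : ℂ)) + Complex.exp (-Complex.I * (y : ℂ))) / 2 := by
      intro y
      rw [Complex.ofReal_cos, Complex.cos]
      ring_nf
    have ha : Complex.exp (Complex.I * (x₁ : ℂ)) * Complex.exp (-Complex.I * (x₁ : ℂ)) = 1 := by
      rw [← Complex.exp_add]; norm_num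
    have hb : Complex.exp (Complex.I * (x₂ : ℂ)) * Complex.exp (-Complex.I * (x₂ : ℂ)) = 1 := by
      rw [← Complex.exp_add]; norm_num
    have e3 : Complex.exp (Complex.I * ((x₁ : ℂ) - (x₂ : ℂ)))
        = Complex.exp (Complex.I * (x₁ : ℂ)) * Complex.exp (-Complex.I * (x₂ : ℂ)) := by
      rw [← Complex.exp_add]; ring_nf
    have e4 : Complex.exp (-Complex.I * ((x₁ : ℂ) - (x₂ : ℂ)))
        = Complex.exp (-Complex.I * (x₁ : ℂ)) * Complex.exp (Complex.I * (x₂ : ℂ)) := by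
      rw [← Complex.exp_add]; ring_nf
    have e5 : Complex.exp (Complex.I * ((x₁ : ℝ) - (x₂ : ℝ) : ℝ))
        = Complex.exp (Complex.I * (x₁ : ℂ)) * Complex.exp (-Complex.I * (x₂ : ℂ)) := by
      push_cast; exact e3
    have e6 : Complex.exp (-Complex.I * ((x₁ : ℝ) - (x₂ : ℝ) : ℝ))
        = Complex.exp (-Complex.I * (x₁ : ℂ)) * Complex.exp (Complex.I * (x₂ : ℂ)) := by
      push_cast; exact e4
    simp only [hc, e3, e4, e5, e6]
    set a := Complex.exp (Complex.I * (x₁ : ℂ)) with hadef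
    set b := Complex.exp (Complex.I * (x₂ : ℂ)) with hbdef
    set c := Complex.exp (-Complex.I * (x₁ : ℂ)) with hcdef
    set d := Complex.exp (-Complex.I * (x₂ : ℂ)) with hddef
    linear_combination (μ / 16 - d / 64 - b / 64 - b * d / 32 + b * d * μ / 16) * ha
      + (-(1 : ℂ) / 32 + μ / 8 - c / 64 - a / 64) * hb
  exact ⟨key lam, by rw [key (1/2)]; ring⟩
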